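/- For every m ≥ 1, the first three occurrences of E_{m,1} in the doubling sequence D∞ start at positions L(E_{m,1},1) = 1, L(E_{m,1},2) = 2^m+1, and L(E_{m,1},3) = 3·2^{m−1}+1. In particular the gap between the first and second occurrence is the single letter δ_m, and the second and third occurrences overlap in 2^{m−1} − 1 letters. -/

import Mathlib

namespace PD

/-- The period-doubling substitution on the alphabet `Bool`,
where `false` stands for the letter `a` and `true` for the letter `b`:
`σ(a) = ab`, `σ(b) = aa`. -/
def sub : Bool → List Bool
  | false => [false, true]
  | true  => [false, false]

/-- The substitution applied to a finite word. -/
def subW (w : List Bool) : List Bool := w.flatMap sub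

/-- `A m = σ^m(a)`. -/
def A (m : ℕ) : List Bool := subW^[m] [false]

/-- `B m = σ^m(b)`. -/
def B (m : ℕ) : List Bool := subW^[m] [true]

/-- The doubling sequence `D∞` (0-indexed: `D n` is the `(n+1)`-th letter),
the fixed point of `σ` beginning with `a`; `A m` is a prefix of `A (m+1)`,
and `A (n+1)` has length `2^(n+1) > n`. -/
def D (n : ℕ) : Bool := (A (n + 1)).getD n false

/-- `δ m`, the last letter of `A m`. -/
def delta (m : ℕ) : Bool := (A m).getLastD false

/-- The envelope words (`i ∈ {1,2}`): `E m 1 = A m` minus its last letter,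
`E m 2 = A (m-1) ++ (A m` minus its last letter `)`. -/
def E (m i : ℕ) : List Bool :=
  if i = 1 then (A m).dropLast else A (m - 1) ++ (A m).dropLast

/-- `w` occurs at the (1-indexed) position `j` in the finite word `τ`. -/
def OccursIn (w τ : List Bool) (j : ℕ) : Prop :=
  1 ≤ j ∧ (τ.drop (j - 1)).take w.length = w

/-- `w` occurs at the (1-indexed) position `j` in the doubling sequence. -/
def OccursD (w : List Bool) (j : ℕ) : Prop :=
  1 ≤ j ∧ ∀ k < w.length, D (j - 1 + k) = w.getD k false

/-- `w` is a factor of the doubling sequence. -/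
def FactorD (w : List Bool) : Prop := ∃ j, OccursD w j

/-- `L w p`: the (1-indexed) starting position of the `p`-th occurrence of `w`
in the doubling sequence, occurrences being ordered by starting position.
(Each factor occurs infinitely often, so `Nat.nth` enumerates all occurrences
in increasing order.) -/
noncomputable def L (w : List Bool) (p : ℕ) : ℕ := Nat.nth (OccursD w) (p - 1)

/-- The strict total order on envelope words:
`E m₁ i₁ ⊏ E m₂ i₂` iff `m₁ < m₂`, or `m₁ = m₂` and `i₁ < i₂`. -/
def EnvLt (m₁ i₁ m₂ i₂ : ℕ) : Prop := m₁ < m₂ ∨ (m₁ = m₂ ∧ i₁ < i₂)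

/-- `Env(w) = E m i`: the envelope word `E m i` is the `⊏`-minimal envelope
word containing `w` as a factor. -/
def IsEnv (w : List Bool) (m i : ℕ) : Prop :=
  1 ≤ m ∧ (i = 1 ∨ i = 2) ∧ w <:+: E m i ∧
    ∀ m' i', 1 ≤ m' → (i' = 1 ∨ i' = 2) → EnvLt m' i' m i → ¬ w <:+: E m' i'

/-- The substitution `φ₁(a) = a`, `φ₁(b) = bb`. -/
def phi1 : Bool → List Bool
  | false => [false]
  | true  => [true, true]

/-- `Θ₁ = φ₁(D∞)` (0-indexed): `φ₁(A (n+1))` is a prefix of `Θ₁` of length `> n`. -/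
def Theta1 (n : ℕ) : Bool := ((A (n + 1)).flatMap phi1).getD n false

/-- The substitution `φ₂(a) = ab`, `φ₂(b) = acac`, over the alphabet `Fin 3`
where `0` stands for `a`, `1` for `b` and `2` for `c`. -/
def phi2 : Bool → List (Fin 3)
  | false => [0, 1]
  | true  => [0, 2, 0, 2]

/-- `Θ₂ = φ₂(D∞)` (0-indexed). -/
def Theta2 (n : ℕ) : Fin 3 := ((A (n + 1)).flatMap phi2).getD n 0

/-- `N₁(x,p)`: the number of letters `x` among the first `p` letters of `Θ₁`. -/
def N1 (x : Bool) (p : ℕ) : ℕ := ((List.range p).map Theta1).count x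

/-- `N₂(x,p)`: the number of letters `x` among the first `p` letters of `Θ₂`. -/
def N2 (x : Fin 3) (p : ℕ) : ℕ := ((List.range p).map Theta2).count x

end PD


namespace PD
set_option linter.dupNamespace false

lemma subW_cons (x : Bool) (w : List Bool) : subW (x :: w) = sub x ++ subW w := rfl

lemma length_subW (w : List Bool) : (subW w).length = 2 * w.length := by
  induction w with
  | nil => rfl
  | cons x w ih => rw [subW_cons, List.length_append, ih, List.length_cons]; cases x <;> simp [sub] <;> ring

lemma A_succ (m : ℕ) : A (m + 1) = subW (A m) := by
  rw [A, A, Function.iterate_succ_apply']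

lemma length_A (m : ℕ) : (A m).length = 2 ^ m := by
  induction m with
  | zero => rfl
  | succ m ih => rw [A_succ, length_subW, ih, pow_succ]; ring

lemma subW_getD_even (w : List Bool) (j : ℕ) (hj : j < w.length) :
    (subW w).getD (2 * j) false = false := by
  induction w generalizing j with
  | nil => simp at hj
  | cons x w ih =>
    cases j with
    | zero => cases x <;> rfl
    | succ j =>
      have : 2 * (j + 1) = 2 * j + 2 := by ring
      rw [this]
      cases x <;> simpa [subW_cons, sub] using ih j (by simpa using hj)

lemma subW_getD_odd (w : List Bool) (j : ℕ) (hj : j < w.length) :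
    (subW w).getD (2 * j + 1) false = !(w.getD j false) := by
  induction w generalizing j with
  | nil => simp at hj
  | cons x w ih =>
    cases j with
    | zero => cases x <;> rfl
    | succ j =>
      have : 2 * (j + 1) + 1 = (2 * j + 1) + 2 := by ring
      rw [this]
      cases x <;> simpa [subW_cons, sub] using ih j (by simpa using hj)

lemma iter_append (m : ℕ) (u v : List Bool) :
    subW^[m] (u ++ v) = subW^[m] u ++ subW^[m] v := by
  induction m generalizing u v with
  | zero => rfl
  | succ m ih => rw [Function.iterate_succ_apply, Function.iterate_succ_apply,
      Function.iterate_succ_apply, subW, List.flatMap_append, ← subW, ← subW, ih]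

lemma A_succ_append (m : ℕ) : A (m + 1) = A m ++ B m := by
  rw [A, Function.iterate_succ_apply]
  show subW^[m] ([false] ++ [true]) = _
  rw [iter_append]; rfl

lemma A_prefix_succ (m : ℕ) : A m <+: A (m + 1) := ⟨B m, (A_succ_append m).symm⟩

lemma A_prefix {m k : ℕ} (h : m ≤ k) : A m <+: A k := by
  induction k with
  | zero => rw [Nat.le_zero.mp h]
  | succ k ih =>
    rcases Nat.lt_or_ge m (k+1) with h' | h'
    · exact (ih (Nat.lt_succ_iff.mp h')).trans (A_prefix_succ k)
    · rw [le_antisymm h h']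

lemma getD_prefix {l l' : List Bool} (h : l <+: l') {n : ℕ} (hn : n < l.length) :
    l'.getD n false = l.getD n false := by
  obtain ⟨t, rfl⟩ := h
  rw [List.getD_append _ _ _ _ hn]

lemma lt_two_pow_succ (n : ℕ) : n < 2 ^ (n + 1) :=
  (Nat.lt_two_pow_self (n := n)).trans (Nat.pow_lt_pow_succ one_lt_two)

lemma D_eq_A {k n : ℕ} (h : n < 2 ^ k) : D n = (A k).getD n false := by
  rcases Nat.le_total k (n + 1) with hk | hk
  · exact getD_prefix (A_prefix hk) (by rw [length_A]; exact h)
  · exact (getD_prefix (A_prefix hk) (by rw [length_A]; exact lt_two_pow_succ n)).symm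

lemma D_even (n : ℕ) : D (2 * n) = false := by
  have h : 2 * n < 2 ^ (n + 1) := by
    have := Nat.lt_two_pow_self (n := n); rw [pow_succ]; omega
  rw [D_eq_A h, A_succ]
  exact subW_getD_even _ n (by rw [length_A]; exact Nat.lt_two_pow_self (n := n))

lemma D_odd (n : ℕ) : D (2 * n + 1) = !(D n) := by
  have h : 2 * n + 1 < 2 ^ (n + 1 + 1) := by
    have := lt_two_pow_succ n; rw [pow_succ]; omega
  rw [D_eq_A h, A_succ, subW_getD_odd _ n (by rw [length_A]; exact lt_two_pow_succ n)]
  rw [D_eq_A (lt_two_pow_succ n)]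


lemma E1_eq (m : ℕ) : E m 1 = (A m).dropLast := rfl

lemma length_E1 (m : ℕ) : (E m 1).length = 2 ^ m - 1 := by
  rw [E1_eq, List.length_dropLast, length_A]

lemma E1_getD_eq_A {m j : ℕ} (hj : j < 2 ^ m - 1) :
    (E m 1).getD j false = (A m).getD j false := by
  rw [E1_eq, List.dropLast_eq_take]
  rw [List.getD, List.getD, List.getElem?_take_of_lt (by rw [length_A]; omega)]

lemma getD_eq_default_of_ge (l : List Bool) {n : ℕ} (h : l.length ≤ n) :
    l.getD n false = false := by
  rw [List.getD, List.getElem?_eq_none h]; rfl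

lemma E1_getD_even (m j : ℕ) : (E (m + 1) 1).getD (2 * j) false = false := by
  rcases Nat.lt_or_ge (2 * j) (2 ^ (m + 1) - 1) with h | h
  · rw [E1_getD_eq_A h, A_succ]
    refine subW_getD_even _ j ?_
    rw [length_A]
    have h1 : 1 ≤ 2 ^ (m + 1) := Nat.one_le_two_pow
    rw [pow_succ] at h; omega
  · exact getD_eq_default_of_ge _ (by rw [length_E1]; omega)

lemma E1_getD_odd (m : ℕ) {j : ℕ} (hj : j < 2 ^ m - 1) :
    (E (m + 1) 1).getD (2 * j + 1) false = !((E m 1).getD j false) := by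
  have hp : 1 ≤ 2 ^ m := Nat.one_le_two_pow
  have h1 : 2 * j + 1 < 2 ^ (m + 1) - 1 := by rw [pow_succ]; omega
  rw [E1_getD_eq_A h1, A_succ,
    subW_getD_odd _ j (by rw [length_A]; omega), E1_getD_eq_A hj]

/-- occurrence of `w` at 0-indexed offset `t` -/
def OccT (w : List Bool) (t : ℕ) : Prop := ∀ k < w.length, D (t + k) = w.getD k false

lemma occ_char {m : ℕ} (hm : 1 ≤ m) (t : ℕ) :
    OccT (E m 1) t ↔ (2 ^ (m - 1) ∣ t ∧ D (t / 2 ^ (m - 1)) = false) := by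
  induction m, hm using Nat.le_induction generalizing t with
  | base =>
    have hE : E 1 1 = [false] := rfl
    simp only [hE, OccT]
    constructor
    · intro h
      refine ⟨one_dvd t, ?_⟩
      simpa using h 0 (by norm_num)
    · rintro ⟨-, h⟩ k hk
      obtain rfl : k = 0 := by simpa [Nat.lt_one_iff] using hk
      simpa using h
  | succ n hn ih =>
    have hp : 1 ≤ 2 ^ n := Nat.one_le_two_pow
    have hpn : 1 ≤ 2 ^ (n - 1) := Nat.one_le_two_pow
    have hn2 : 2 ≤ 2 ^ n := by rw [show n = (n-1)+1 by omega, pow_succ]; omega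
    rcases Nat.even_or_odd t with ⟨s, rfl⟩ | ⟨s, rfl⟩
    · -- even offset: t = s + s = 2 * s
      rw [show s + s = 2 * s by ring]
      have key : OccT (E (n + 1) 1) (2 * s) ↔ OccT (E n 1) s := by
        constructor
        · intro H k hk
          rw [length_E1] at hk
          have hk2 : 2 * k + 1 < (E (n + 1) 1).length := by
            rw [length_E1, pow_succ]; omega
          have h2 := H (2 * k + 1) hk2
          rw [E1_getD_odd n (by omega), show 2*s + (2*k+1) = 2*(s+k)+1 by ring,
            D_odd] at h2
          exact Bool.not_inj h2
        · intro H k hk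
          rw [length_E1] at hk
          rcases Nat.even_or_odd k with ⟨j, rfl⟩ | ⟨j, rfl⟩
          · rw [show j + j = 2 * j by ring, show 2*s + 2*j = 2*(s+j) by ring,
              D_even, E1_getD_even]
          · have hj : j < 2 ^ n - 1 := by rw [pow_succ] at hk; omega
            rw [show 2*s + (2*j+1) = 2*(s+j)+1 by ring, D_odd,
              E1_getD_odd n hj, H j (by rw [length_E1]; omega)]
      have e1 : (n + 1) - 1 = n := rfl
      have e2 : 2 ^ n = 2 * 2 ^ (n - 1) := by
        conv_lhs => rw [show n = (n - 1) + 1 by omega]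
        rw [pow_succ]; ring
      have hdiv : 2 * s / (2 * 2 ^ (n - 1)) = s / 2 ^ (n - 1) :=
        Nat.mul_div_mul_left s (2 ^ (n - 1)) two_pos
      rw [key, ih s, e1, e2, hdiv, mul_dvd_mul_iff_left (by norm_num : (2:ℕ) ≠ 0)]
    · -- odd offset: impossible
      constructor
      · intro H
        exfalso
        have h1 : (1:ℕ) < (E (n + 1) 1).length := by rw [length_E1, pow_succ]; omega
        have h2 := H 1 h1
        rw [show 2*s+1+1 = 2*(s+1) by ring, D_even] at h2
        have e3 : (E (n + 1) 1).getD 1 false = true := by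
          have h3 := E1_getD_odd n (j := 0) (by omega)
          rw [show 2*0+1 = 1 by ring] at h3
          rw [h3]
          obtain ⟨n', rfl⟩ : ∃ n', n = n' + 1 := ⟨n - 1, by omega⟩
          rw [show (0:ℕ) = 2*0 by ring, E1_getD_even]
          rfl
        rw [e3] at h2
        exact Bool.false_ne_true h2
      · rintro ⟨hd, -⟩
        exfalso
        have e2 : 2 ^ ((n + 1) - 1) = 2 * 2 ^ (n - 1) := by
          conv_lhs => rw [show (n+1)-1 = (n-1)+1 by omega]
          rw [pow_succ]; ring
        rw [e2] at hd
        have h2 : (2:ℕ) ∣ 2 * s + 1 := dvd_trans (dvd_mul_right 2 _) hd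
        omega

lemma D0 : D 0 = false := rfl
lemma D1 : D 1 = true := rfl
lemma D2 : D 2 = false := rfl
lemma D3 : D 3 = false := rfl

lemma occursD_char {m : ℕ} (hm : 1 ≤ m) (j : ℕ) :
    OccursD (E m 1) j ↔
      1 ≤ j ∧ (2 ^ (m - 1) ∣ (j - 1) ∧ D ((j - 1) / 2 ^ (m - 1)) = false) :=
  and_congr Iff.rfl (occ_char hm (j - 1))

lemma getD_last (l : List Bool) (h : l ≠ []) :
    l.getD (l.length - 1) false = l.getLastD false := by
  rw [List.getLastD_eq_getLast?, List.getLast?_eq_getElem?, List.getD_eq_getElem?_getD]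

lemma occ_points {m : ℕ} (hm : 1 ≤ m) :
    OccursD (E m 1) 1 ∧ OccursD (E m 1) (2 ^ m + 1) ∧
      OccursD (E m 1) (3 * 2 ^ (m - 1) + 1) ∧
      (∀ j < 2 ^ m + 1, OccursD (E m 1) j → j = 1) ∧
      (∀ j < 3 * 2 ^ (m - 1) + 1, OccursD (E m 1) j → j = 1 ∨ j = 2 ^ m + 1) := by
  have hpn : 1 ≤ 2 ^ (m - 1) := Nat.one_le_two_pow
  have hpn0 : 0 < 2 ^ (m - 1) := hpn
  have e2 : 2 ^ m = 2 * 2 ^ (m - 1) := by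
    conv_lhs => rw [show m = (m - 1) + 1 by omega]
    rw [pow_succ]; ring
  refine ⟨?_, ?_, ?_, ?_, ?_⟩
  · rw [occursD_char hm]
    refine ⟨le_refl 1, ⟨0, by omega⟩, ?_⟩
    norm_num [D0]
  · rw [occursD_char hm]
    refine ⟨by omega, ⟨2, by omega⟩, ?_⟩
    have : (2 ^ m + 1 - 1) / 2 ^ (m - 1) = 2 := by
      rw [show 2 ^ m + 1 - 1 = 2 ^ (m - 1) * 2 by omega, Nat.mul_div_cancel_left _ hpn0]
    rw [this, D2]
  · rw [occursD_char hm]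
    refine ⟨by omega, ⟨3, by omega⟩, ?_⟩
    have : (3 * 2 ^ (m - 1) + 1 - 1) / 2 ^ (m - 1) = 3 := by
      rw [show 3 * 2 ^ (m - 1) + 1 - 1 = 2 ^ (m - 1) * 3 by omega, Nat.mul_div_cancel_left _ hpn0]
    rw [this, D3]
  · intro j hj hocc
    rw [occursD_char hm] at hocc
    obtain ⟨h1, ⟨q, hq⟩, hD⟩ := hocc
    have hq' : (j - 1) / 2 ^ (m - 1) = q := by
      rw [hq, Nat.mul_div_cancel_left _ hpn0]
    rw [hq'] at hD
    have hqlt : q < 2 := by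
      by_contra h
      push_neg at h
      have : 2 * 2 ^ (m - 1) ≤ 2 ^ (m - 1) * q := by
        calc 2 * 2 ^ (m - 1) = 2 ^ (m - 1) * 2 := by ring
        _ ≤ 2 ^ (m - 1) * q := Nat.mul_le_mul_left _ h
      omega
    interval_cases q
    · omega
    · rw [D1] at hD; exact absurd hD (by simp)
  · intro j hj hocc
    rw [occursD_char hm] at hocc
    obtain ⟨h1, ⟨q, hq⟩, hD⟩ := hocc
    have hq' : (j - 1) / 2 ^ (m - 1) = q := by
      rw [hq, Nat.mul_div_cancel_left _ hpn0]
    rw [hq'] at hD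
    have hqlt : q < 3 := by
      by_contra h
      push_neg at h
      have : 3 * 2 ^ (m - 1) ≤ 2 ^ (m - 1) * q := by
        calc 3 * 2 ^ (m - 1) = 2 ^ (m - 1) * 3 := by ring
        _ ≤ 2 ^ (m - 1) * q := Nat.mul_le_mul_left _ h
      omega
    interval_cases q
    · omega
    · rw [D1] at hD; exact absurd hD (by simp)
    · right; omega

end PD

open PD
/-- For every `m ≥ 1`, the first three occurrences of `E m 1` in the doubling
sequence start at positions `1`, `2^m+1` and `3·2^(m-1)+1`. In particular the gap
between the first two occurrences is the single letter `δ_m` (the letter of `D∞`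
at 1-indexed position `2^m`), and the second and third occurrences overlap in
`2^(m-1) − 1` letters. -/
theorem doubling_E1_first_three (m : ℕ) (hm : 1 ≤ m) :
    L (E m 1) 1 = 1 ∧ L (E m 1) 2 = 2 ^ m + 1 ∧ L (E m 1) 3 = 3 * 2 ^ (m - 1) + 1 ∧
      D (2 ^ m - 1) = delta m ∧
      L (E m 1) 2 + (E m 1).length - L (E m 1) 3 = 2 ^ (m - 1) - 1 := by
  classical
  obtain ⟨p1, p2, p3, u1, u2⟩ := occ_points hm
  set p := OccursD (E m 1) with hp
  have hpn : 1 ≤ 2 ^ (m - 1) := Nat.one_le_two_pow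
  have e2 : 2 ^ m = 2 * 2 ^ (m - 1) := by
    conv_lhs => rw [show m = (m - 1) + 1 by omega]
    rw [pow_succ]; ring
  have hnp0 : ¬ p 0 := fun h => absurd h.1 (by norm_num)
  have c1 : Nat.count p 1 = 0 := by
    rw [Nat.count_succ, Nat.count_zero, if_neg hnp0]
  have c2 : Nat.count p (2 ^ m + 1) = 1 := by
    rw [Nat.count_eq_card_filter_range]
    have : (Finset.range (2 ^ m + 1)).filter p = {1} := by
      ext j
      simp only [Finset.mem_filter, Finset.mem_range, Finset.mem_singleton]
      constructor
      · rintro ⟨hj, hocc⟩; exact u1 j hj hocc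
      · rintro rfl; exact ⟨by omega, p1⟩
    rw [this, Finset.card_singleton]
  have c3 : Nat.count p (3 * 2 ^ (m - 1) + 1) = 2 := by
    rw [Nat.count_eq_card_filter_range]
    have : (Finset.range (3 * 2 ^ (m - 1) + 1)).filter p = {1, 2 ^ m + 1} := by
      ext j
      simp only [Finset.mem_filter, Finset.mem_range, Finset.mem_insert, Finset.mem_singleton]
      constructor
      · rintro ⟨hj, hocc⟩; exact u2 j hj hocc
      · rintro (rfl | rfl)
        · exact ⟨by omega, p1⟩
        · exact ⟨by omega, p2⟩
    rw [this, Finset.card_insert_of_notMem (by simp only [Finset.mem_singleton]; have h2 : 1 ≤ 2 ^ m := Nat.one_le_two_pow; omega), Finset.card_singleton]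
  have n1 : Nat.nth p 0 = 1 := by
    have := Nat.nth_count (p := p) p1
    rwa [c1] at this
  have n2 : Nat.nth p 1 = 2 ^ m + 1 := by
    have := Nat.nth_count (p := p) p2
    rwa [c2] at this
  have n3 : Nat.nth p 2 = 3 * 2 ^ (m - 1) + 1 := by
    have := Nat.nth_count (p := p) p3
    rwa [c3] at this
  have hL1 : L (E m 1) 1 = 1 := n1
  have hL2 : L (E m 1) 2 = 2 ^ m + 1 := n2
  have hL3 : L (E m 1) 3 = 3 * 2 ^ (m - 1) + 1 := n3
  have hlen : (E m 1).length = 2 ^ m - 1 := length_E1 m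
  have hdelta : D (2 ^ m - 1) = delta m := by
    have hA : (A m).length = 2 ^ m := length_A m
    have hne : A m ≠ [] := by
      intro h; rw [h] at hA; simp at hA; omega
    rw [D_eq_A (by omega : 2 ^ m - 1 < 2 ^ m), delta, ← getD_last (A m) hne, hA]
  refine ⟨hL1, hL2, hL3, hdelta, ?_⟩
  rw [hL2, hL3, hlen]
  omega
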